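/- Let X be an n×m real matrix with n ≥ 1, let a be a row index such that X_{a,j} ≠ 0 for every column j, and let δ ≥ 0. Suppose that for every row index i and all column indices j₁, j₂ it holds that |X_{i,j₁}/X_{a,j₁} − X_{i,j₂}/X_{a,j₂}| ≤ δ. Then there exists an n×m real matrix X̂ of rank at most 1 such that ‖X − X̂‖_F ≤ δ · √( (n−1) · (Σ_{j₁<j₂} X_{a,j₁}² X_{a,j₂}²) / (Σ_j X_{a,j}²) ). -/
import Mathlib

lemma aux_pair_split {m : ℕ} (F : Fin m → Fin m → ℝ)
    (hsymm : ∀ j k, F j k = F k j) (hdiag : ∀ j, F j j = 0) :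
    ∑ j, ∑ k, F j k =
      2 * ∑ p ∈ Finset.univ.filter (fun p : Fin m × Fin m => p.1 < p.2), F p.1 p.2 := by
  rw [← Finset.sum_product', Finset.univ_product_univ]
  rw [← Finset.sum_filter_add_sum_filter_not (Finset.univ : Finset (Fin m × Fin m))
    (fun p : Fin m × Fin m => p.1 < p.2)]
  have h2 : ∑ p ∈ (Finset.univ : Finset (Fin m × Fin m)).filter (fun p : Fin m × Fin m => ¬ p.1 < p.2),
      F p.1 p.2 = ∑ p ∈ (Finset.univ : Finset (Fin m × Fin m)).filter
      (fun p : Fin m × Fin m => p.1 < p.2), F p.1 p.2 := by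
    rw [← Finset.sum_filter_add_sum_filter_not _ (fun p : Fin m × Fin m => p.2 < p.1)]
    have hzero : ∑ p ∈ ((Finset.univ : Finset (Fin m × Fin m)).filter
        (fun p : Fin m × Fin m => ¬ p.1 < p.2)).filter
        (fun p : Fin m × Fin m => ¬ p.2 < p.1), F p.1 p.2 = 0 := by
      apply Finset.sum_eq_zero
      intro p hp
      simp only [Finset.mem_filter] at hp
      have : p.1 = p.2 := le_antisymm (not_lt.mp hp.2) (not_lt.mp hp.1.2)
      rw [this, hdiag]
    rw [hzero, add_zero]
    apply Finset.sum_nbij' (fun p => Prod.swap p) (fun p => Prod.swap p)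
    · intro p hp
      simp only [Finset.mem_filter, Finset.mem_univ, true_and] at hp ⊢
      exact hp.2
    · intro p hp
      simp only [Finset.mem_filter, Finset.mem_univ, true_and] at hp ⊢
      exact ⟨not_lt.mpr hp.le, hp⟩
    · intro p _; exact Prod.swap_swap p
    · intro p _; exact Prod.swap_swap p
    · intro p _; exact hsymm p.1 p.2
  rw [h2]; ring

lemma aux_var {m : ℕ} (w r : Fin m → ℝ) (hw : ∀ j, 0 < w j) (δ : ℝ)
    (hr : ∀ j k, |r j - r k| ≤ δ) (hm : 0 < m) :
    ∑ j, w j * (r j - (∑ k, w k * r k) / (∑ k, w k)) ^ 2 ≤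
      δ ^ 2 * (∑ p ∈ Finset.univ.filter (fun p : Fin m × Fin m => p.1 < p.2),
        w p.1 * w p.2) / (∑ k, w k) := by
  have : Nonempty (Fin m) := ⟨⟨0, hm⟩⟩
  set W := ∑ k, w k with hW
  set T := ∑ k, w k * r k with hT
  have hWpos : 0 < W := Finset.sum_pos (fun j _ => hw j) Finset.univ_nonempty
  have hQ : ∑ j, ∑ k, w j * w k * (r j - r k) ^ 2
      = 2 * (W * (∑ k, w k * r k ^ 2) - T ^ 2) := by
    have h1 : ∀ j, ∑ k, w j * w k * (r j - r k) ^ 2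
        = w j * r j ^ 2 * W + w j * (∑ k, w k * r k ^ 2) - 2 * (w j * r j) * T := by
      intro j
      have hterm : ∀ k, w j * w k * (r j - r k) ^ 2
          = w j * r j ^ 2 * w k + w j * (w k * r k ^ 2) - 2 * (w j * r j) * (w k * r k) :=
        fun k => by ring
      rw [Finset.sum_congr rfl (fun k _ => hterm k), Finset.sum_sub_distrib,
        Finset.sum_add_distrib, ← Finset.mul_sum, ← Finset.mul_sum, ← Finset.mul_sum]
    rw [Finset.sum_congr rfl (fun j _ => h1 j), Finset.sum_sub_distrib,
      Finset.sum_add_distrib, ← Finset.sum_mul, ← Finset.sum_mul]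
    have h3 : ∑ j, 2 * (w j * r j) * T = 2 * T * T := by
      rw [← Finset.sum_mul, ← Finset.mul_sum]
    rw [h3]; ring
  have hpair : ∑ j, ∑ k, w j * w k * (r j - r k) ^ 2
      = 2 * ∑ p ∈ Finset.univ.filter (fun p : Fin m × Fin m => p.1 < p.2),
        w p.1 * w p.2 * (r p.1 - r p.2) ^ 2 := by
    apply aux_pair_split
    · intro j k; rw [show (r j - r k) ^ 2 = (r k - r j) ^ 2 by ring]; ring
    · intro j; simp
  have hbound : ∑ p ∈ Finset.univ.filter (fun p : Fin m × Fin m => p.1 < p.2),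
      w p.1 * w p.2 * (r p.1 - r p.2) ^ 2
      ≤ δ ^ 2 * ∑ p ∈ Finset.univ.filter (fun p : Fin m × Fin m => p.1 < p.2),
        w p.1 * w p.2 := by
    rw [Finset.mul_sum]
    apply Finset.sum_le_sum
    intro p _
    have h1 : (r p.1 - r p.2) ^ 2 ≤ δ ^ 2 := by
      have := hr p.1 p.2
      nlinarith [abs_nonneg (r p.1 - r p.2), sq_abs (r p.1 - r p.2), abs_nonneg (r p.1 - r p.2)]
    have h2 : 0 ≤ w p.1 * w p.2 := le_of_lt (mul_pos (hw p.1) (hw p.2))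
    nlinarith
  -- identity : W * LHS = W*Q - T²
  have hid : W * ∑ j, w j * (r j - T / W) ^ 2 = W * (∑ k, w k * r k ^ 2) - T ^ 2 := by
    have h1 : ∀ j, w j * (r j - T / W) ^ 2
        = w j * r j ^ 2 - 2 * (T / W) * (w j * r j) + (T / W) ^ 2 * w j := by
      intro j; ring
    rw [Finset.sum_congr rfl (fun j _ => h1 j), Finset.sum_add_distrib,
      Finset.sum_sub_distrib, ← Finset.mul_sum, ← Finset.mul_sum]
    field_simp
    ring
  rw [le_div_iff₀ hWpos]
  calc (∑ j, w j * (r j - T / W) ^ 2) * W = W * (∑ k, w k * r k ^ 2) - T ^ 2 := by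
        rw [mul_comm]; exact hid
    _ = ∑ p ∈ Finset.univ.filter (fun p : Fin m × Fin m => p.1 < p.2),
        w p.1 * w p.2 * (r p.1 - r p.2) ^ 2 := by linarith [hQ.symm.trans hpair]
    _ ≤ δ ^ 2 * ∑ p ∈ Finset.univ.filter (fun p : Fin m × Fin m => p.1 < p.2),
        w p.1 * w p.2 := hbound

theorem stmt8 (n m : ℕ) (hn : 1 ≤ n) (X : Matrix (Fin n) (Fin m) ℝ) (a : Fin n)
    (ha : ∀ j, X a j ≠ 0) (δ : ℝ) (hδ : 0 ≤ δ)
    (h : ∀ i j₁ j₂, |X i j₁ / X a j₁ - X i j₂ / X a j₂| ≤ δ) :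
    ∃ Xhat : Matrix (Fin n) (Fin m) ℝ, Xhat.rank ≤ 1 ∧
      Real.sqrt (∑ i, ∑ j, (X i j - Xhat i j) ^ 2) ≤
        δ * Real.sqrt (((n : ℝ) - 1) *
          (∑ p ∈ Finset.univ.filter (fun p : Fin m × Fin m => p.1 < p.2),
            (X a p.1) ^ 2 * (X a p.2) ^ 2) / (∑ j, (X a j) ^ 2)) := by
  rcases Nat.eq_zero_or_pos m with hm | hm
  · subst hm
    refine ⟨0, by simp [Matrix.rank_zero], ?_⟩
    have hempty : (Finset.univ : Finset (Fin 0 × Fin 0)) = ∅ := by simp [Finset.eq_empty_iff_forall_notMem]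
    simp [Finset.sum_const_zero, hempty]
  -- main case
  set w : Fin m → ℝ := fun j => X a j ^ 2 with hw
  have hwpos : ∀ j, 0 < w j := fun j => by have := ha j; positivity
  set W := ∑ k, w k with hWdef
  have : Nonempty (Fin m) := ⟨⟨0, hm⟩⟩
  have hWpos : 0 < W := Finset.sum_pos (fun j _ => hwpos j) Finset.univ_nonempty
  set c : Fin n → ℝ := fun i => (∑ k, w k * (X i k / X a k)) / W with hc
  refine ⟨Matrix.vecMulVec c (X a), ?_, ?_⟩
  · rw [Matrix.vecMulVec_eq Unit]
    exact le_trans (Matrix.rank_mul_le_left _ _)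
      (le_trans (Matrix.rank_le_card_width _) (by simp))
  set P := ∑ p ∈ Finset.univ.filter (fun p : Fin m × Fin m => p.1 < p.2),
    (X a p.1) ^ 2 * (X a p.2) ^ 2 with hP
  have hPnn : 0 ≤ P := Finset.sum_nonneg fun p _ => by positivity
  -- per-row inequality
  have hrow : ∀ i, ∑ j, (X i j - Matrix.vecMulVec c (X a) i j) ^ 2 ≤ δ ^ 2 * P / W := by
    intro i
    have heq : ∀ j, (X i j - Matrix.vecMulVec c (X a) i j) ^ 2
        = w j * (X i j / X a j - c i) ^ 2 := by
      intro j
      have hj := ha j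
      rw [Matrix.vecMulVec, Matrix.of_apply]
      field_simp
      ring
    rw [Finset.sum_congr rfl (fun j _ => heq j)]
    exact aux_var w (fun j => X i j / X a j) hwpos δ (h i) hm
  -- row a has zero error
  have hrowa : ∑ j, (X a j - Matrix.vecMulVec c (X a) a j) ^ 2 = 0 := by
    have hca : c a = 1 := by
      have : ∀ k, w k * (X a k / X a k) = w k := by
        intro k; rw [div_self (ha k), mul_one]
      rw [hc]
      simp only [this]
      exact div_self hWpos.ne'
    apply Finset.sum_eq_zero
    intro j _
    rw [Matrix.vecMulVec, Matrix.of_apply, hca]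
    ring
  -- total bound
  have htot : ∑ i, ∑ j, (X i j - Matrix.vecMulVec c (X a) i j) ^ 2
      ≤ ((n : ℝ) - 1) * (δ ^ 2 * P / W) := by
    rw [← Finset.add_sum_erase _ _ (Finset.mem_univ a), hrowa, zero_add]
    calc ∑ i ∈ Finset.univ.erase a, ∑ j, (X i j - Matrix.vecMulVec c (X a) i j) ^ 2
        ≤ ∑ _i ∈ Finset.univ.erase a, δ ^ 2 * P / W :=
          Finset.sum_le_sum fun i _ => hrow i
      _ = ((n : ℝ) - 1) * (δ ^ 2 * P / W) := by
          rw [Finset.sum_const, Finset.card_erase_of_mem (Finset.mem_univ a),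
            Finset.card_univ, Fintype.card_fin, nsmul_eq_mul, Nat.cast_sub hn]
          push_cast; ring
  calc Real.sqrt (∑ i, ∑ j, (X i j - Matrix.vecMulVec c (X a) i j) ^ 2)
      ≤ Real.sqrt (δ ^ 2 * (((n : ℝ) - 1) * P / W)) := by
        apply Real.sqrt_le_sqrt
        calc ∑ i, ∑ j, (X i j - Matrix.vecMulVec c (X a) i j) ^ 2
            ≤ ((n : ℝ) - 1) * (δ ^ 2 * P / W) := htot
          _ = δ ^ 2 * (((n : ℝ) - 1) * P / W) := by ring
    _ = δ * Real.sqrt (((n : ℝ) - 1) * P / W) := by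
        rw [Real.sqrt_mul (sq_nonneg δ), Real.sqrt_sq hδ]
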